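/- arXiv:0811.2660 — 4 statements merged into one kernel-verified Lean document; each statement's English description precedes it below -/
import Mathlib

section
/- With φ as above (the sum over increasing multi-indices of determinants involving the derivatives f'_{i₁,...,i_k}(x)), evaluating φ on basis vectors gives: for any 1 ≤ i₁ < ... < i_{k+1} ≤ n, φ(e_{i₁},...,e_{i_{k+1}}) = Σ_{j=1}^{k+1} (−1)^{j+1} ∂f_{i₁,...,î_j,...,i_{k+1}}/∂x_{i_j}(x), where î_j means that index i_j is omitted from the multi-index. -/
open Matrix

lemma exists_succAbove_of_strictMono {k : ℕ} (σ : Fin k → Fin (k+1)) (hσ : StrictMono σ) :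
    ∃ j : Fin (k+1), σ = j.succAbove := by
  haveI : WellFoundedLT (Fin k) := inferInstance
  have hcard : (Finset.image σ Finset.univ)ᶜ.card = 1 := by
    rw [Finset.card_compl, Finset.card_image_of_injective _ hσ.injective]
    simp
  obtain ⟨j, hj⟩ := Finset.card_eq_one.mp hcard
  have hr : Set.range σ = Set.range (Fin.succAbove j) := by
    have h1 : Set.range σ = ↑(Finset.image σ Finset.univ) := by
      simp [Finset.coe_image]
    rw [h1, Fin.range_succAbove, ← compl_compl (Finset.image σ Finset.univ), hj]
    simp
  exact ⟨j, (hσ.range_inj (Fin.strictMono_succAbove j)).mp hr⟩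

/-- Evaluating `φ` (the sum over increasing multi-indices of determinants involving
the derivatives of the coefficient functions) on basis vectors `e_{t 1},...,e_{t (k+1)}`
for an increasing `(k+1)`-multi-index `t` gives the coordinate of the exterior
derivative: `Σ_j (−1)^{j+1} ∂f_{t∘(omit j)}/∂x_{t j}(x)`. -/
theorem stmt7 (n k : ℕ) (x : Fin n → ℝ)
    (f : {s : Fin k → Fin n // StrictMono s} → (Fin n → ℝ) → ℝ)
    (hf : ∀ s, DifferentiableAt ℝ (f s) x)
    (φ : (Fin (k + 1) → (Fin n → ℝ)) → ℝ)
    (hφ : ∀ a, φ a = ∑ s : {s : Fin k → Fin n // StrictMono s},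
      Matrix.det (Matrix.of fun p q : Fin (k + 1) =>
        Fin.cases (fderiv ℝ (f s) x (a q)) (fun p' => a q (s.1 p')) p))
    (t : Fin (k + 1) → Fin n) (ht : StrictMono t) :
    φ (fun q => Pi.single (t q) 1) =
      ∑ j : Fin (k + 1), (-1 : ℝ) ^ (j : ℕ) *
        fderiv ℝ (f ⟨fun p => t (j.succAbove p),
          ht.comp (Fin.strictMono_succAbove j)⟩) x (Pi.single (t j) 1) := by
  classical
  rw [hφ]
  set g : Fin (k+1) → {s : Fin k → Fin n // StrictMono s} :=
    fun j => ⟨fun p => t (j.succAbove p), ht.comp (Fin.strictMono_succAbove j)⟩ with hg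
  let D : {s : Fin k → Fin n // StrictMono s} → ℝ := fun s =>
    Matrix.det (Matrix.of fun p q : Fin (k + 1) =>
      Fin.cases (fderiv ℝ (f s) x (Pi.single (t q) 1))
        (fun p' => (Pi.single (t q) (1:ℝ) : Fin n → ℝ) (s.1 p')) p)
  show (∑ s : {s : Fin k → Fin n // StrictMono s}, D s) = _
  have hginj : Function.Injective g := by
    intro j j' h
    have h2 : (fun p => t (j.succAbove p)) = fun p => t (j'.succAbove p) :=
      congrArg Subtype.val h
    have h3 : j.succAbove = j'.succAbove := funext fun p => ht.injective (congrFun h2 p)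
    exact Fin.succAbove_left_injective h3
  -- vanishing off the image of g
  have hzero : ∀ s ∈ Finset.univ, s ∉ Finset.image g Finset.univ → D s = 0 := by
    intro s _ hs
    by_cases hA : ∀ p' : Fin k, ∃ q : Fin (k+1), s.1 p' = t q
    · -- s is a subsequence of t, hence in the image: contradiction
      choose σ hσ using hA
      have hσmono : StrictMono σ := by
        intro p p' hpp
        have : t (σ p) < t (σ p') := by
          rw [← hσ p, ← hσ p']; exact s.2 hpp
        exact ht.lt_iff_lt.mp this
      obtain ⟨j, hj⟩ := exists_succAbove_of_strictMono σ hσmono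
      exfalso
      apply hs
      refine Finset.mem_image.mpr ⟨j, Finset.mem_univ j, ?_⟩
      apply Subtype.ext
      funext p
      show t (j.succAbove p) = s.1 p
      rw [← hj, hσ p]
    · -- some row of the matrix is zero
      push_neg at hA
      obtain ⟨p', hp'⟩ := hA
      apply Matrix.det_eq_zero_of_row_eq_zero p'.succ
      intro q
      simp only [Matrix.of_apply, Fin.cases_succ]
      rw [Pi.single_apply]
      exact if_neg (hp' q)
  have key : ∀ j : Fin (k+1), D (g j) =
      (-1 : ℝ) ^ (j : ℕ) * fderiv ℝ (f (g j)) x (Pi.single (t j) 1) := by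
    intro j
    simp only [D]
    rw [Matrix.det_succ_row_zero]
    rw [Finset.sum_eq_single j]
    · have h1 : (Matrix.of fun p q : Fin (k + 1) =>
          (Fin.cases (fderiv ℝ (f (g j)) x (Pi.single (t q) 1))
            (fun p' => (Pi.single (t q) (1:ℝ) : Fin n → ℝ) ((g j).1 p')) p : ℝ)).submatrix
            Fin.succ j.succAbove = 1 := by
        ext p' q'
        simp only [Matrix.submatrix_apply, Matrix.of_apply, Fin.cases_succ]
        rw [Pi.single_apply, Matrix.one_apply]
        by_cases h : p' = q'
        · subst h; simp; rfl
        · rw [if_neg h, if_neg]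
          intro hc
          exact h (Fin.succAbove_right_injective (ht.injective hc))
      rw [h1, Matrix.det_one]
      simp
    · intro q _ hq
      have h0 : ((Matrix.of fun p q : Fin (k + 1) =>
          (Fin.cases (fderiv ℝ (f (g j)) x (Pi.single (t q) 1))
            (fun p' => (Pi.single (t q) (1:ℝ) : Fin n → ℝ) ((g j).1 p')) p : ℝ)).submatrix
            Fin.succ q.succAbove).det = 0 := by
        obtain ⟨q₀, hq₀⟩ := Fin.exists_succAbove_eq (Ne.symm hq)
        apply Matrix.det_eq_zero_of_column_eq_zero q₀
        intro p'
        simp only [Matrix.submatrix_apply, Matrix.of_apply, Fin.cases_succ]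
        rw [hq₀, Pi.single_apply, if_neg]
        intro hc
        exact Fin.succAbove_ne j p' (ht.injective hc)
      rw [h0]
      ring
    · intro h
      exact absurd (Finset.mem_univ j) h
  calc (∑ s : {s : Fin k → Fin n // StrictMono s}, D s)
      = ∑ s ∈ Finset.image g Finset.univ, D s :=
        (Finset.sum_subset (Finset.subset_univ _) hzero).symm
    _ = ∑ j : Fin (k+1), D (g j) :=
        Finset.sum_image (fun a _ b _ h => hginj h)
    _ = _ := by
      refine Finset.sum_congr rfl fun j _ => ?_
      rw [key j]
end

section
/- Let F = (f,g,h) : ℝ³ → ℝ³ be differentiable at x. Define B(e₁,e₂) = F(x)⋅a e₁ + F(x + e₁ a)⋅b e₂ − F(x + e₂ b)⋅a e₁ − F(x)⋅b e₂ for real e₁, e₂ (the circulation of the 1-form f dx + g dy + h dz around the infinitesimal parallelogram spanned by a, b). Then the second-order mixed partial derivative ∂²B/∂e₁∂e₂ at (0,0) equals (curl F)(x) ⋅ (a × b). -/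
open Matrix

lemma basis_expand (φ : (Fin 3 → ℝ) →L[ℝ] ℝ) (v : Fin 3 → ℝ) :
    φ v = v 0 * φ (Pi.single 0 1) + v 1 * φ (Pi.single 1 1) + v 2 * φ (Pi.single 2 1) := by
  have hv : v = v 0 • (Pi.single 0 1 : Fin 3 → ℝ) + v 1 • (Pi.single 1 1 : Fin 3 → ℝ) + v 2 • (Pi.single 2 1 : Fin 3 → ℝ) := by
    ext i; fin_cases i <;> simp
  rw [hv]
  simp [map_add, _root_.map_smul, smul_eq_mul]

lemma line_deriv (f : (Fin 3 → ℝ) → ℝ) (x v : Fin 3 → ℝ)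
    (hf : DifferentiableAt ℝ f x) :
    HasDerivAt (fun t : ℝ => f (x + t • v)) (fderiv ℝ f x v) 0 := by
  have hline : HasDerivAt (fun t : ℝ => x + t • v) v 0 := by
    simpa using ((hasDerivAt_id (0:ℝ)).smul_const v).const_add x
  have hfx : HasFDerivAt f (fderiv ℝ f x) (x + (0:ℝ) • v) := by
    simpa using hf.hasFDerivAt
  have := hfx.comp_hasDerivAt 0 hline
  exact this

/-- The mixed second partial at `(0,0)` of the circulation
`B(e₁,e₂) = F(x)⬝a e₁ + F(x+e₁a)⬝b e₂ − F(x+e₂b)⬝a e₁ − F(x)⬝b e₂`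
equals `(curl F)(x) ⬝ (a × b)`. -/
theorem stmt10 (f g h : (Fin 3 → ℝ) → ℝ) (x a b : Fin 3 → ℝ)
    (F : (Fin 3 → ℝ) → (Fin 3 → ℝ)) (hF : ∀ y, F y = ![f y, g y, h y])
    (hf : DifferentiableAt ℝ f x) (hg : DifferentiableAt ℝ g x)
    (hh : DifferentiableAt ℝ h x)
    (B : ℝ → ℝ → ℝ)
    (hB : ∀ e₁ e₂, B e₁ e₂ =
      F x ⬝ᵥ a * e₁ + F (x + e₁ • a) ⬝ᵥ b * e₂ -
      F (x + e₂ • b) ⬝ᵥ a * e₁ - F x ⬝ᵥ b * e₂) :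
    deriv (fun e₁ => deriv (fun e₂ => B e₁ e₂) 0) 0 =
      ![fderiv ℝ h x (Pi.single 1 1) - fderiv ℝ g x (Pi.single 2 1),
        fderiv ℝ f x (Pi.single 2 1) - fderiv ℝ h x (Pi.single 0 1),
        fderiv ℝ g x (Pi.single 0 1) - fderiv ℝ f x (Pi.single 1 1)] ⬝ᵥ
        crossProduct a b := by
  set df := fderiv ℝ f x
  set dg := fderiv ℝ g x
  set dh := fderiv ℝ h x
  have hdot : ∀ (y v : Fin 3 → ℝ), F y ⬝ᵥ v = f y * v 0 + g y * v 1 + h y * v 2 := by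
    intro y v
    simp [hF, dotProduct, Fin.sum_univ_three]
  -- derivative of t ↦ F (x + t • v) ⬝ᵥ w
  have key : ∀ (v w : Fin 3 → ℝ),
      HasDerivAt (fun t : ℝ => F (x + t • v) ⬝ᵥ w)
        (df v * w 0 + dg v * w 1 + dh v * w 2) 0 := by
    intro v w
    have := (((line_deriv f x v hf).mul_const (w 0)).add
      ((line_deriv g x v hg).mul_const (w 1))).add
      ((line_deriv h x v hh).mul_const (w 2))
    simp only [hdot]
    exact this
  set c := df b * a 0 + dg b * a 1 + dh b * a 2 with hc
  have inner : ∀ e₁ : ℝ,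
      deriv (fun e₂ => B e₁ e₂) 0 = F (x + e₁ • a) ⬝ᵥ b - c * e₁ - F x ⬝ᵥ b := by
    intro e₁
    have h1 : HasDerivAt (fun e₂ : ℝ => B e₁ e₂)
        (F (x + e₁ • a) ⬝ᵥ b - c * e₁ - F x ⬝ᵥ b) 0 := by
      have h2 : HasDerivAt (fun e₂ : ℝ =>
          F x ⬝ᵥ a * e₁ + F (x + e₁ • a) ⬝ᵥ b * e₂ -
          F (x + e₂ • b) ⬝ᵥ a * e₁ - F x ⬝ᵥ b * e₂)
          (F (x + e₁ • a) ⬝ᵥ b - c * e₁ - F x ⬝ᵥ b) 0 := by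
        exact ((((hasDerivAt_id (0:ℝ)).const_mul (F (x + e₁ • a) ⬝ᵥ b)).const_add _).sub
          ((key b a).mul_const e₁)).sub ((hasDerivAt_id (0:ℝ)).const_mul (F x ⬝ᵥ b)) |>.congr_deriv
          (by ring)
      exact h2.congr_of_eventuallyEq (Filter.Eventually.of_forall fun e₂ => (hB e₁ e₂))
    exact h1.deriv
  have outer : HasDerivAt (fun e₁ : ℝ => F (x + e₁ • a) ⬝ᵥ b - c * e₁ - F x ⬝ᵥ b)
      ((df a * b 0 + dg a * b 1 + dh a * b 2) - c) 0 := by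
    have := ((key a b).sub ((hasDerivAt_id (0:ℝ)).const_mul c)).sub_const (F x ⬝ᵥ b)
    simpa [mul_comm] using this
  have hderiv : deriv (fun e₁ => deriv (fun e₂ => B e₁ e₂) 0) 0 =
      (df a * b 0 + dg a * b 1 + dh a * b 2) - c := by
    have := (outer.congr_of_eventuallyEq
      (Filter.Eventually.of_forall fun e₁ => inner e₁)).deriv
    exact this
  rw [hderiv, hc]
  rw [basis_expand df a, basis_expand dg a, basis_expand dh a,
    basis_expand df b, basis_expand dg b, basis_expand dh b]
  simp [crossProduct, dotProduct, Fin.sum_univ_three]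
  ring
end

section
/- Let F = (f,g,h) : ℝ³ → ℝ³ be differentiable at x, and fix a,b,c ∈ ℝ³. Define the flux boundary sum S(e₁,e₂,e₃) = [F(x + e₁a) − F(x)]⋅(b×c) e₂e₃ + [F(x) − F(x + e₂b)]⋅(a×c) e₁e₃ + [F(x + e₃c) − F(x)]⋅(a×b) e₁e₂. Then the third-order mixed partial derivative ∂³S/∂e₁∂e₂∂e₃ at (0,0,0) equals (div F)(x) · det(a,b,c). -/
open Matrix

/-- The mixed third partial at `(0,0,0)` of the flux boundary sum
`S(e₁,e₂,e₃) = [F(x+e₁a)−F(x)]⬝(b×c) e₂e₃ + [F(x)−F(x+e₂b)]⬝(a×c) e₁e₃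
             + [F(x+e₃c)−F(x)]⬝(a×b) e₁e₂`
equals `(div F)(x) · det(a,b,c)`. -/
theorem stmt11 (f g h : (Fin 3 → ℝ) → ℝ) (x a b c : Fin 3 → ℝ)
    (F : (Fin 3 → ℝ) → (Fin 3 → ℝ)) (hF : ∀ y, F y = ![f y, g y, h y])
    (hf : ContDiffAt ℝ 1 f x) (hg : ContDiffAt ℝ 1 g x) (hh : ContDiffAt ℝ 1 h x)
    (S : ℝ → ℝ → ℝ → ℝ)
    (hS : ∀ e₁ e₂ e₃, S e₁ e₂ e₃ =
      (F (x + e₁ • a) - F x) ⬝ᵥ crossProduct b c * (e₂ * e₃) +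
      (F x - F (x + e₂ • b)) ⬝ᵥ crossProduct a c * (e₁ * e₃) +
      (F (x + e₃ • c) - F x) ⬝ᵥ crossProduct a b * (e₁ * e₂)) :
    deriv (fun e₁ => deriv (fun e₂ => deriv (fun e₃ => S e₁ e₂ e₃) 0) 0) 0 =
      (fderiv ℝ f x (Pi.single 0 1) + fderiv ℝ g x (Pi.single 1 1) +
        fderiv ℝ h x (Pi.single 2 1)) *
        Matrix.det (Matrix.of fun i j => ![a, b, c] j i) := by
  have hf' := hf.differentiableAt one_ne_zero
  have hg' := hg.differentiableAt one_ne_zero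
  have hh' := hh.differentiableAt one_ne_zero
  have key : ∀ (φ : (Fin 3 → ℝ) → ℝ), DifferentiableAt ℝ φ x → ∀ v : Fin 3 → ℝ,
      HasDerivAt (fun t : ℝ => φ (x + t • v)) (fderiv ℝ φ x v) 0 := by
    intro φ hφ v
    have hline : HasDerivAt (fun t : ℝ => x + t • v) v 0 := by
      simpa using ((hasDerivAt_id (0:ℝ)).smul_const v).const_add x
    have hx : ((fun t : ℝ => x + t • v) 0) = x := by simp
    have hφf := hφ.hasFDerivAt
    rw [← hx] at hφf
    simpa [Function.comp_def] using hφf.comp_hasDerivAt 0 hline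
  -- dot product expansion
  have dot : ∀ (y : Fin 3 → ℝ) (u : Fin 3 → ℝ),
      (F y - F x) ⬝ᵥ u = (f y - f x) * u 0 + (g y - g x) * u 1 + (h y - h x) * u 2 := by
    intro y u
    simp [hF, dotProduct, Fin.sum_univ_three]
  set u : Fin 3 → ℝ := crossProduct b c with hu
  set v : Fin 3 → ℝ := crossProduct a c with hv
  set w : Fin 3 → ℝ := crossProduct a b with hw
  set A : ℝ → ℝ := fun t => (F (x + t • a) - F x) ⬝ᵥ u with hAdef
  set B : ℝ → ℝ := fun t => (F x - F (x + t • b)) ⬝ᵥ v with hBdef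
  set C : ℝ → ℝ := fun t => (F (x + t • c) - F x) ⬝ᵥ w with hCdef
  set dA : ℝ := fderiv ℝ f x a * u 0 + fderiv ℝ g x a * u 1 + fderiv ℝ h x a * u 2 with hdA
  set dB : ℝ := -(fderiv ℝ f x b * v 0 + fderiv ℝ g x b * v 1 + fderiv ℝ h x b * v 2) with hdB
  set dC : ℝ := fderiv ℝ f x c * w 0 + fderiv ℝ g x c * w 1 + fderiv ℝ h x c * w 2 with hdC
  have hAd : HasDerivAt A dA 0 := by
    have hAeq : A = fun t => (f (x + t • a) - f x) * u 0 + (g (x + t • a) - g x) * u 1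
        + (h (x + t • a) - h x) * u 2 := by
      funext t; exact dot _ _
    rw [hAeq, hdA]
    exact ((((key f hf' a).sub_const (f x)).mul_const (u 0)).add
      (((key g hg' a).sub_const (g x)).mul_const (u 1))).add
      (((key h hh' a).sub_const (h x)).mul_const (u 2))
  have hBd : HasDerivAt B dB 0 := by
    have hBeq : B = fun t => -((f (x + t • b) - f x) * v 0 + (g (x + t • b) - g x) * v 1
        + (h (x + t • b) - h x) * v 2) := by
      funext t
      have : (F x - F (x + t • b)) ⬝ᵥ v = -((F (x + t • b) - F x) ⬝ᵥ v) := by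
        rw [← neg_dotProduct, neg_sub]
      rw [hBdef]; simp only [this, dot]
    rw [hBeq, hdB]
    exact (((((key f hf' b).sub_const (f x)).mul_const (v 0)).add
      (((key g hg' b).sub_const (g x)).mul_const (v 1))).add
      (((key h hh' b).sub_const (h x)).mul_const (v 2))).neg
  have hCd : HasDerivAt C dC 0 := by
    have hCeq : C = fun t => (f (x + t • c) - f x) * w 0 + (g (x + t • c) - g x) * w 1
        + (h (x + t • c) - h x) * w 2 := by
      funext t; exact dot _ _
    rw [hCeq, hdC]
    exact ((((key f hf' c).sub_const (f x)).mul_const (w 0)).add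
      (((key g hg' c).sub_const (g x)).mul_const (w 1))).add
      (((key h hh' c).sub_const (h x)).mul_const (w 2))
  have hSeq : ∀ e₁ e₂ e₃, S e₁ e₂ e₃ = A e₁ * (e₂ * e₃) + B e₂ * (e₁ * e₃) + C e₃ * (e₁ * e₂) := hS
  -- innermost derivative
  have step3 : ∀ e₁ e₂, deriv (fun e₃ => S e₁ e₂ e₃) 0 = A e₁ * e₂ + B e₂ * e₁ + dC * (e₁ * e₂) := by
    intro e₁ e₂
    have d1 : HasDerivAt (fun e₃ : ℝ => A e₁ * (e₂ * e₃)) (A e₁ * e₂) 0 := by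
      simpa [mul_assoc] using (hasDerivAt_id (0:ℝ)).const_mul (A e₁ * e₂)
    have d2 : HasDerivAt (fun e₃ : ℝ => B e₂ * (e₁ * e₃)) (B e₂ * e₁) 0 := by
      simpa [mul_assoc] using (hasDerivAt_id (0:ℝ)).const_mul (B e₂ * e₁)
    have d3 : HasDerivAt (fun e₃ : ℝ => C e₃ * (e₁ * e₂)) (dC * (e₁ * e₂)) 0 :=
      hCd.mul_const _
    have : HasDerivAt (fun e₃ => S e₁ e₂ e₃) (A e₁ * e₂ + B e₂ * e₁ + dC * (e₁ * e₂)) 0 := by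
      simp only [hSeq]
      exact (d1.add d2).add d3
    exact this.deriv
  have step2 : ∀ e₁, deriv (fun e₂ => deriv (fun e₃ => S e₁ e₂ e₃) 0) 0
      = A e₁ + dB * e₁ + dC * e₁ := by
    intro e₁
    have d1 : HasDerivAt (fun e₂ : ℝ => A e₁ * e₂) (A e₁) 0 := by
      simpa using (hasDerivAt_id (0:ℝ)).const_mul (A e₁)
    have d2 : HasDerivAt (fun e₂ : ℝ => B e₂ * e₁) (dB * e₁) 0 := hBd.mul_const _
    have d3 : HasDerivAt (fun e₂ : ℝ => dC * (e₁ * e₂)) (dC * e₁) 0 := by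
      simpa [mul_assoc, mul_comm, mul_left_comm] using (hasDerivAt_id (0:ℝ)).const_mul (dC * e₁)
    have : HasDerivAt (fun e₂ : ℝ => A e₁ * e₂ + B e₂ * e₁ + dC * (e₁ * e₂))
        (A e₁ + dB * e₁ + dC * e₁) 0 := (d1.add d2).add d3
    rw [funext (step3 e₁)]
    exact this.deriv
  rw [funext step2]
  have hA0 : A 0 = 0 := by
    rw [hAdef]; simp
  have dfinal : HasDerivAt (fun e₁ : ℝ => A e₁ + dB * e₁ + dC * e₁) (dA + dB + dC) 0 := by
    have d2 : HasDerivAt (fun e₁ : ℝ => dB * e₁) dB 0 := by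
      simpa using (hasDerivAt_id (0:ℝ)).const_mul dB
    have d3 : HasDerivAt (fun e₁ : ℝ => dC * e₁) dC 0 := by
      simpa using (hasDerivAt_id (0:ℝ)).const_mul dC
    exact (hAd.add d2).add d3
  rw [dfinal.deriv]
  -- final algebraic identity
  have expand : ∀ (φ : (Fin 3 → ℝ) → ℝ), DifferentiableAt ℝ φ x → ∀ y : Fin 3 → ℝ,
      fderiv ℝ φ x y = y 0 * fderiv ℝ φ x (Pi.single 0 1) + y 1 * fderiv ℝ φ x (Pi.single 1 1)
        + y 2 * fderiv ℝ φ x (Pi.single 2 1) := by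
    intro φ hφ y
    have hy : y = y 0 • (Pi.single 0 1 : Fin 3 → ℝ) + y 1 • (Pi.single 1 1 : Fin 3 → ℝ) + y 2 • (Pi.single 2 1 : Fin 3 → ℝ) := by
      funext i; fin_cases i <;> simp [Pi.single_apply]
    conv_lhs => rw [hy]
    simp [map_add, _root_.map_smul, smul_eq_mul]
  rw [hdA, hdB, hdC, expand f hf' a, expand g hg' a, expand h hh' a,
    expand f hf' b, expand g hg' b, expand h hh' b,
    expand f hf' c, expand g hg' c, expand h hh' c,
    hu, hv, hw]
  simp only [cross_apply, Matrix.det_fin_three, Matrix.of_apply,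
    Matrix.cons_val_zero, Matrix.cons_val_one, Matrix.head_cons,
    Matrix.cons_val_two, Matrix.tail_cons]
  ring
end

section
/- Let k < n, fix x ∈ ℝⁿ, and let ω be the differential k-form Σ_{i₁<...<i_k} f_{i₁,...,i_k} dx_{i₁}∧...∧dx_{i_k} with each coefficient differentiable at x. Then the alternating (k+1)-form φ(a¹,...,a^{k+1}) = Σ_{i₁<...<i_k} det[first row f'_{i₁,...,i_k}(x)(aᑫ); rows (aᑫ)_{i_p}] equals Σ_{1 ≤ i₁<...<i_{k+1} ≤ n} (Σ_{j=1}^{k+1} (−1)^{j+1} ∂f_{i₁,...,î_j,...,i_{k+1}}/∂x_{i_j}(x)) dx_{i₁}∧...∧dx_{i_{k+1}} as alternating multilinear maps on (ℝⁿ)^{k+1}. -/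
open Matrix

/-- Sorting: given strictly monotone `s : Fin k → Fin n` and `i` not in its range,
there is a strictly monotone `t : Fin (k+1) → Fin n` inserting `i` at position `j`. -/
lemma stmt14_sort {n k : ℕ} (s : Fin k → Fin n) (hs : StrictMono s) (i : Fin n)
    (hi : ∀ p, s p ≠ i) :
    ∃ (t : Fin (k+1) → Fin n) (_ : StrictMono t) (j : Fin (k+1)),
      t j = i ∧ (fun p => t (j.succAbove p)) = s := by
  classical
  have hinotmem : i ∉ Finset.image s Finset.univ := by
    simp only [Finset.mem_image, Finset.mem_univ, true_and, not_exists]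
    exact hi
  have hcards : (Finset.image s Finset.univ).card = k := by
    rw [Finset.card_image_of_injective _ hs.injective, Finset.card_univ, Fintype.card_fin]
  set A : Finset (Fin n) := insert i (Finset.image s Finset.univ) with hA
  have hcard : A.card = k + 1 := by
    rw [hA, Finset.card_insert_of_notMem hinotmem, hcards]
  set t : Fin (k+1) → Fin n := ⇑(A.orderEmbOfFin hcard) with ht
  have htmono : StrictMono t := (A.orderEmbOfFin hcard).strictMono
  have hrange : ∀ p, t p ∈ A := fun p => A.orderEmbOfFin_mem hcard p
  have hiA : i ∈ A := Finset.mem_insert_self _ _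
  obtain ⟨j, hj⟩ : ∃ j, t j = i := by
    have := (Finset.range_orderEmbOfFin A hcard)
    have : i ∈ Set.range (A.orderEmbOfFin hcard) := this ▸ hiA
    exact this
  refine ⟨t, htmono, j, hj, ?_⟩
  have hmem : ∀ p, t (j.succAbove p) ∈ Finset.image s Finset.univ := by
    intro p
    have h1 : t (j.succAbove p) ∈ A := hrange _
    have h2 : t (j.succAbove p) ≠ i := by
      rw [← hj]
      exact fun h => (Fin.succAbove_ne j p) (htmono.injective h)
    rcases Finset.mem_insert.mp h1 with h | h
    · exact absurd h h2
    · exact h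
  have e1 : (fun p => t (j.succAbove p)) = Finset.orderEmbOfFin _ hcards :=
    Finset.orderEmbOfFin_unique hcards hmem (htmono.comp (Fin.strictMono_succAbove j))
  have e2 : s = Finset.orderEmbOfFin _ hcards :=
    Finset.orderEmbOfFin_unique hcards (by simp) hs
  exact e1.trans e2.symm

/-- Uniqueness of the insertion data. -/
lemma stmt14_inj {n k : ℕ} (t t' : Fin (k+1) → Fin n) (ht : StrictMono t) (ht' : StrictMono t')
    (j j' : Fin (k+1)) (h1 : (fun p => t (j.succAbove p)) = (fun p => t' (j'.succAbove p)))
    (h2 : t j = t' j') : t = t' ∧ j = j' := by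
  classical
  have hcard : (Finset.image t Finset.univ).card = k + 1 := by
    rw [Finset.card_image_of_injective _ ht.injective, Finset.card_univ, Fintype.card_fin]
  have hmem' : ∀ p, t' p ∈ Finset.image t Finset.univ := by
    intro p
    rcases eq_or_ne p j' with rfl | hp
    · rw [← h2]; exact Finset.mem_image_of_mem _ (Finset.mem_univ _)
    · obtain ⟨y, hy⟩ := Fin.exists_succAbove_eq hp
      rw [← hy, ← congrFun h1 y]
      exact Finset.mem_image_of_mem _ (Finset.mem_univ _)
  have e1 : t' = Finset.orderEmbOfFin _ hcard :=
    Finset.orderEmbOfFin_unique hcard hmem' ht'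
  have e2 : t = Finset.orderEmbOfFin _ hcard :=
    Finset.orderEmbOfFin_unique hcard (by simp) ht
  have htt' : t = t' := e2.trans e1.symm
  subst htt'
  exact ⟨rfl, ht.injective h2⟩

/-- Expansion of the determinant along the first (derivative) row. -/
lemma stmt14_expand {n k : ℕ} (L : (Fin n → ℝ) →L[ℝ] ℝ) (a : Fin (k+1) → (Fin n → ℝ))
    (s : Fin k → Fin n) :
    Matrix.det (Matrix.of fun p q : Fin (k + 1) =>
        Fin.cases (L (a q)) (fun p' => a q (s p')) p) =
    ∑ i : Fin n, L (Pi.single i 1) *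
      Matrix.det (Matrix.of fun p q : Fin (k+1) => a q ((Fin.cons i s : Fin (k+1) → Fin n) p)) := by
  have hrow : ∀ q, L (a q) = ∑ i : Fin n, L (Pi.single i 1) * a q i := by
    intro q
    conv_lhs => rw [← Finset.univ_sum_single (a q)]
    rw [map_sum]
    refine Finset.sum_congr rfl fun i _ => ?_
    have h1 : Pi.single i (a q i) = a q i • (Pi.single i (1:ℝ) : Fin n → ℝ) := by
      rw [← Pi.single_smul]; simp
    rw [h1, _root_.map_smul]; simp [mul_comm]
  set M : Matrix (Fin (k+1)) (Fin (k+1)) ℝ :=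
    Matrix.of fun p q : Fin (k + 1) => Fin.cases (L (a q)) (fun p' => a q (s p')) p with hM
  have hdet : M.det = Matrix.detRowAlternating M := rfl
  have hupd : ∀ r : Fin (k+1) → ℝ, Function.update (M : Fin (k+1) → Fin (k+1) → ℝ) 0 r =
      Matrix.of fun p q => Fin.cases (r q) (fun p' => a q (s p')) p := by
    intro r
    funext p
    cases p using Fin.cases with
    | zero => erw [Function.update_self]; rfl
    | succ p' => erw [Function.update_of_ne (Fin.succ_ne_zero p')]; rfl
  have hM0 : (M : Fin (k+1) → Fin (k+1) → ℝ) =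
      Function.update (M : Fin (k+1) → Fin (k+1) → ℝ) 0
        (∑ i : Fin n, L (Pi.single i 1) • fun q => a q i) := by
    rw [hupd]
    funext p q
    cases p using Fin.cases with
    | zero =>
      show L (a q) = _
      rw [hrow q]
      simp [Finset.sum_apply]
    | succ p' => rfl
  erw [hdet, hM0, AlternatingMap.map_update_sum]
  refine Finset.sum_congr rfl fun i _ => ?_
  erw [AlternatingMap.map_update_smul, smul_eq_mul]
  congr 1
  rw [hupd]
  show Matrix.det _ = Matrix.det _
  congr 1
  funext p q
  cases p using Fin.cases with
  | zero => rfl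
  | succ p' => rfl

/-- Sign of moving a row from position `j` to the top. -/
lemma stmt14_perm {n k : ℕ} (a : Fin (k+1) → (Fin n → ℝ)) (t : Fin (k+1) → Fin n)
    (j : Fin (k+1)) :
    Matrix.det (Matrix.of fun p q : Fin (k+1) =>
      a q ((Fin.cons (t j) (fun p' => t (j.succAbove p')) : Fin (k+1) → Fin n) p)) =
    (-1 : ℝ) ^ (j : ℕ) * Matrix.det (Matrix.of fun p q : Fin (k+1) => a q (t p)) := by
  have hmat : (Matrix.of fun p q : Fin (k+1) =>
      a q ((Fin.cons (t j) (fun p' => t (j.succAbove p')) : Fin (k+1) → Fin n) p)) =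
      (Matrix.of fun p q : Fin (k+1) => a q (t p)).submatrix
        (j.cycleRange.symm : Equiv.Perm (Fin (k+1))) id := by
    funext p q
    cases p using Fin.cases with
    | zero => simp [Fin.cycleRange_symm_zero]
    | succ p' => simp [Fin.cycleRange_symm_succ]
  rw [hmat, Matrix.det_permute]
  congr 1
  rw [Equiv.Perm.sign_symm, Fin.sign_cycleRange]
  simp

/-- Coordinate formula for the exterior derivative: for `k < n`, the alternating
`(k+1)`-form `φ(a¹,...,a^{k+1}) = Σ_{s increasing} det[first row (f s)'(x)(aᑫ);
remaining rows (aᑫ)_{s p}]` equals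
`Σ_{t increasing} (Σ_j (−1)^{j+1} ∂f_{t∘(omit j)}/∂x_{t j}(x)) dx_{t 1}∧...∧dx_{t(k+1)}`. -/
theorem stmt14 (n k : ℕ) (hkn : k < n) (x : Fin n → ℝ)
    (f : {s : Fin k → Fin n // StrictMono s} → (Fin n → ℝ) → ℝ)
    (hf : ∀ s, DifferentiableAt ℝ (f s) x)
    (a : Fin (k + 1) → (Fin n → ℝ)) :
    (∑ s : {s : Fin k → Fin n // StrictMono s},
      Matrix.det (Matrix.of fun p q : Fin (k + 1) =>
        Fin.cases (fderiv ℝ (f s) x (a q)) (fun p' => a q (s.1 p')) p)) =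
    ∑ t : {t : Fin (k + 1) → Fin n // StrictMono t},
      (∑ j : Fin (k + 1), (-1 : ℝ) ^ (j : ℕ) *
        fderiv ℝ (f ⟨fun p => t.1 (j.succAbove p),
          t.2.comp (Fin.strictMono_succAbove j)⟩) x (Pi.single (t.1 j) 1)) *
      Matrix.det (Matrix.of fun p q : Fin (k + 1) => a q (t.1 p)) := by
  classical
  set c : {s : Fin k → Fin n // StrictMono s} → Fin n → ℝ :=
    fun s i => fderiv ℝ (f s) x (Pi.single i 1) with hc
  set D : (Fin (k+1) → Fin n) → ℝ :=
    fun g => Matrix.det (Matrix.of fun p q : Fin (k+1) => a q (g p)) with hD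
  calc (∑ s : {s : Fin k → Fin n // StrictMono s},
      Matrix.det (Matrix.of fun p q : Fin (k + 1) =>
        Fin.cases (fderiv ℝ (f s) x (a q)) (fun p' => a q (s.1 p')) p))
      = ∑ s : {s : Fin k → Fin n // StrictMono s}, ∑ i : Fin n,
          c s i * D (Fin.cons i s.1) := by
        refine Finset.sum_congr rfl fun s _ => ?_
        exact stmt14_expand (fderiv ℝ (f s) x) a s.1
    _ = ∑ p : {s : Fin k → Fin n // StrictMono s} × Fin n,
          c p.1 p.2 * D (Fin.cons p.2 p.1.1) :=
        (Fintype.sum_prod_type (fun p : {s : Fin k → Fin n // StrictMono s} × Fin n => c p.1 p.2 * D (Fin.cons p.2 p.1.1))).symm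
    _ = ∑ p : {t : Fin (k + 1) → Fin n // StrictMono t} × Fin (k+1),
          ((-1 : ℝ) ^ (p.2 : ℕ) *
            c ⟨fun q => p.1.1 (p.2.succAbove q),
              p.1.2.comp (Fin.strictMono_succAbove p.2)⟩ (p.1.1 p.2)) * D p.1.1 := by
        refine (Finset.sum_of_injOn
          (fun p => (⟨fun q => p.1.1 (p.2.succAbove q),
            p.1.2.comp (Fin.strictMono_succAbove p.2)⟩, p.1.1 p.2))
          ?_ (fun _ _ => Finset.mem_univ _) ?_ ?_).symm
        · rintro ⟨t, j⟩ - ⟨t', j'⟩ - h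
          obtain ⟨h1, h2⟩ := Prod.mk.injEq .. ▸ h
          obtain ⟨ht, hj⟩ := stmt14_inj t.1 t'.1 t.2 t'.2 j j'
            (congrArg Subtype.val h1) h2
          simp only [Prod.mk.injEq]
          exact ⟨Subtype.ext ht, hj⟩
        · rintro ⟨s, i⟩ - hnot
          by_cases h : ∃ p, s.1 p = i
          · obtain ⟨p0, hp0⟩ := h
            have hz : D (Fin.cons i s.1) = 0 := by
              refine Matrix.det_zero_of_row_eq (Fin.succ_ne_zero p0).symm ?_
              funext q
              show a q ((Fin.cons i s.1 : Fin (k+1) → Fin n) 0) =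
                a q ((Fin.cons i s.1 : Fin (k+1) → Fin n) p0.succ)
              rw [Fin.cons_zero, Fin.cons_succ, hp0]
            rw [hz, mul_zero]
          · push_neg at h
            obtain ⟨t, ht, j, hj1, hj2⟩ := stmt14_sort s.1 s.2 i h
            exfalso
            apply hnot
            refine ⟨(⟨t, ht⟩, j), by simp, ?_⟩
            simp only [Prod.mk.injEq]
            exact ⟨Subtype.ext hj2, hj1⟩
        · rintro ⟨t, j⟩ -
          show ((-1 : ℝ) ^ (j : ℕ) * c _ (t.1 j)) * D t.1 = c _ (t.1 j) * D _
          have := stmt14_perm a t.1 j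
          rw [hD]
          show ((-1 : ℝ) ^ (j : ℕ) * c _ (t.1 j)) *
            Matrix.det (Matrix.of fun p q : Fin (k+1) => a q (t.1 p)) =
            c _ (t.1 j) * Matrix.det (Matrix.of fun p q : Fin (k+1) =>
              a q ((Fin.cons (t.1 j) (fun p' => t.1 (j.succAbove p')) : Fin (k+1) → Fin n) p))
          rw [this]
          ring
    _ = ∑ t : {t : Fin (k + 1) → Fin n // StrictMono t}, ∑ j : Fin (k+1),
          ((-1 : ℝ) ^ (j : ℕ) *
            c ⟨fun q => t.1 (j.succAbove q),
              t.2.comp (Fin.strictMono_succAbove j)⟩ (t.1 j)) * D t.1 :=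
        Fintype.sum_prod_type (fun p : {t : Fin (k + 1) → Fin n // StrictMono t} × Fin (k+1) =>
          ((-1 : ℝ) ^ (p.2 : ℕ) *
            c ⟨fun q => p.1.1 (p.2.succAbove q),
              p.1.2.comp (Fin.strictMono_succAbove p.2)⟩ (p.1.1 p.2)) * D p.1.1)
    _ = _ := by
        refine Finset.sum_congr rfl fun t _ => ?_
        rw [Finset.sum_mul]
end
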